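/- On the probability space of the strong approximation theorem (where sup_{u} |n^{1/2} A_n(u) − K*_C(u,n)| = O(n^{1/2−1/(4d)}(log n)^{3/2}) almost surely, with C twice continuously differentiable on (0,1)^d and second-order partials continuous on [0,1]^d), one has almost surely limsup_{n→∞} (n/(2 log log n))^{1/2} sup_{u ∈ [0,1]^d} |C_n(u) − C(u)| = limsup_{n→∞} sup_{u ∈ [0,1]^d} |K*_C(u,n)| / (2 n log log n)^{1/2}. -/

import Mathlib

open MeasureTheory ProbabilityTheory Filter Set
open scoped Classical

noncomputable section

/-- The closed unit cube `[0,1]^d`. -/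
def unitCube (d : ℕ) : Set (Fin d → ℝ) := Set.univ.pi fun _ => Set.Icc (0:ℝ) 1

/-- The open unit cube `(0,1)^d`. -/
def openCube (d : ℕ) : Set (Fin d → ℝ) := Set.univ.pi fun _ => Set.Ioo (0:ℝ) 1

/-- Marginal empirical distribution function `G_{n}` built from a sequence `U`. -/
def empG (U : ℕ → ℝ) (n : ℕ) (u : ℝ) : ℝ :=
  (∑ i ∈ Finset.range n, if U i ≤ u then (1:ℝ) else 0) / n

/-- Generalized inverse `G_n^{-}`. -/
def empGinv (U : ℕ → ℝ) (n : ℕ) (u : ℝ) : ℝ := sInf {t : ℝ | u ≤ empG U n t}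

/-- The empirical distribution function `C̃_n` of the (unobservable) uniforms. -/
def empCt {d : ℕ} (U : Fin d → ℕ → ℝ) (n : ℕ) (u : Fin d → ℝ) : ℝ :=
  (∑ i ∈ Finset.range n, ∏ j, if U j i ≤ u j then (1:ℝ) else 0) / n

/-- The empirical copula `C_n`. -/
def empCop {d : ℕ} (U : Fin d → ℕ → ℝ) (n : ℕ) (u : Fin d → ℝ) : ℝ :=
  empCt U n fun j => empGinv (U j) n (u j)

/-- Joint distribution function of a law `μ` on `ℝ^d`. -/
def distF {d : ℕ} (μ : Measure (Fin d → ℝ)) (x : Fin d → ℝ) : ℝ :=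
  (μ {y | ∀ j, y j ≤ x j}).toReal

/-- Marginal distribution functions of a law `μ` on `ℝ^d`. -/
def margF {d : ℕ} (μ : Measure (Fin d → ℝ)) (j : Fin d) (x : ℝ) : ℝ :=
  (μ {y | y j ≤ x}).toReal

/-- Generalized inverse (quantile function) of a distribution function. -/
def qInv (F : ℝ → ℝ) (u : ℝ) : ℝ := sInf {x : ℝ | u ≤ F x}

/-- The copula of a law `μ` on `ℝ^d`: `C(u) = F(F_1^{-}(u_1),…,F_d^{-}(u_d))`. -/
def copulaOf {d : ℕ} (μ : Measure (Fin d → ℝ)) (u : Fin d → ℝ) : ℝ :=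
  distF μ fun j => qInv (margF μ j) (u j)

/-- The sequence of uniforms `U_{ji} = F_j(X_{ji})` attached to the data `X` at `ω`. -/
def unifOf {d : ℕ} {Ω : Type*} (μ : Measure (Fin d → ℝ)) (X : ℕ → Ω → Fin d → ℝ)
    (ω : Ω) (j : Fin d) (i : ℕ) : ℝ := margF μ j (X i ω j)

/-- `X_1, X_2, …` is an i.i.d. sequence of measurable random vectors. -/
def IsIIDSeq {d : ℕ} {Ω : Type*} [MeasurableSpace Ω] (P : Measure Ω)
    (X : ℕ → Ω → Fin d → ℝ) : Prop :=
  (∀ i, Measurable (X i)) ∧ iIndepFun X P ∧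
    ∀ i, Measure.map (X i) P = Measure.map (X 0) P

/-- A real-valued stochastic process indexed by `ι` is a (centered) Gaussian family:
every finite linear combination is a centered real Gaussian variable. -/
def IsGaussianFamily {Ω ι : Type*} [MeasurableSpace Ω] (P : Measure Ω)
    (Z : ι → Ω → ℝ) : Prop :=
  ∀ (m : ℕ) (c : Fin m → ℝ) (t : Fin m → ι), ∃ v : NNReal,
    Measure.map (fun ω => ∑ i, c i * Z (t i) ω) P = gaussianReal 0 v

/-- `C` is twice continuously differentiable on `(0,1)^d` and all its second-order
partial derivatives extend continuously to `[0,1]^d`. -/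
def SecondOrderSmooth (d : ℕ) (C : (Fin d → ℝ) → ℝ) : Prop :=
  ContDiffOn ℝ 2 C (openCube d) ∧
  ∀ j k : Fin d, ∃ g : (Fin d → ℝ) → ℝ, ContinuousOn g (unitCube d) ∧
    ∀ u ∈ openCube d,
      g u = fderiv ℝ (fun v => fderiv ℝ C v (Pi.single j 1)) u (Pi.single k 1)

/-- `Cp j` is the (continuous extension to `[0,1]^d` of the) first-order partial
derivative `∂C/∂u_j`. -/
def IsPartialDerivs (d : ℕ) (C : (Fin d → ℝ) → ℝ) (Cp : Fin d → (Fin d → ℝ) → ℝ) : Prop :=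
  ∀ j, ContinuousOn (Cp j) (unitCube d) ∧
    ∀ u ∈ openCube d, Cp j u = fderiv ℝ C u (Pi.single j 1)

/-- A Kiefer process associated with the copula `C`: a centered Gaussian process on
`[0,1]^d × [0,∞)` with covariance `(z ∧ t){C(u ∧ v) − C(u)C(v)}`. -/
def IsKieferCopula {d : ℕ} {Ω : Type*} [MeasurableSpace Ω] (P : Measure Ω)
    (C : (Fin d → ℝ) → ℝ) (K : (Fin d → ℝ) → ℝ → Ω → ℝ) : Prop :=
  (∀ u t, Measurable (K u t)) ∧
  IsGaussianFamily P (fun p : (Fin d → ℝ) × ℝ => K p.1 p.2) ∧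
  (∀ u ∈ unitCube d, ∀ t : ℝ, 0 ≤ t → ∫ ω, K u t ω ∂P = 0) ∧
  (∀ u ∈ unitCube d, ∀ v ∈ unitCube d, ∀ z t : ℝ, 0 ≤ z → 0 ≤ t →
    ∫ ω, K u z ω * K v t ω ∂P
      = min z t * (C (fun j => min (u j) (v j)) - C u * C v))

/-- The copula Gaussian process
`K*_C(u,t) = K_C(u,t) − Σ_j (∂C(u)/∂u_j) K_C(1,…,1,u_j,1,…,1,t)`. -/
def copulaGaussian {d : ℕ} {Ω : Type*} (Cp : Fin d → (Fin d → ℝ) → ℝ)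
    (K : (Fin d → ℝ) → ℝ → Ω → ℝ) (u : Fin d → ℝ) (t : ℝ) (ω : Ω) : ℝ :=
  K u t ω - ∑ j, Cp j u * K (Function.update (fun _ => (1:ℝ)) j (u j)) t ω

end

private lemma aux_limsup_le {a b : ℕ → ℝ} (ha : ∀ n, 0 ≤ a n) (hb : ∀ n, 0 ≤ b n)
    (h : Filter.Tendsto (fun n => a n - b n) atTop (nhds 0))
    (hbdd : IsBoundedUnder (· ≤ ·) atTop b) :
    Filter.limsup a atTop ≤ Filter.limsup b atTop := by
  have hcob : IsCoboundedUnder (· ≤ ·) atTop b :=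
    (Filter.isBoundedUnder_of ⟨0, hb⟩).isCoboundedUnder_le
  have hcoa : IsCoboundedUnder (· ≤ ·) atTop a :=
    (Filter.isBoundedUnder_of ⟨0, ha⟩).isCoboundedUnder_le
  refine le_of_forall_pos_le_add fun ε hε => ?_
  have hev : ∀ᶠ n in atTop, a n ≤ b n + ε := by
    have := Metric.tendsto_nhds.mp h ε hε
    filter_upwards [this] with n hn
    rw [Real.dist_eq, sub_zero] at hn
    have := (abs_lt.mp hn).2
    linarith
  have hbdd' : IsBoundedUnder (· ≤ ·) atTop (fun n => b n + ε) := by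
    obtain ⟨M, hM⟩ := hbdd
    rw [Filter.eventually_map] at hM
    exact ⟨M + ε, Filter.eventually_map.mpr <| by
      filter_upwards [hM] with n hn; exact add_le_add_left hn ε⟩
  calc Filter.limsup a atTop ≤ Filter.limsup (fun n => b n + ε) atTop :=
        Filter.limsup_le_limsup hev hcoa hbdd'
    _ = Filter.limsup b atTop + ε := limsup_add_const atTop b ε hbdd hcob

private lemma aux_limsup_eq {a b : ℕ → ℝ} (ha : ∀ n, 0 ≤ a n) (hb : ∀ n, 0 ≤ b n)
    (h : Filter.Tendsto (fun n => a n - b n) atTop (nhds 0)) :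
    Filter.limsup a atTop = Filter.limsup b atTop := by
  have h' : Filter.Tendsto (fun n => b n - a n) atTop (nhds 0) := by
    have := h.neg
    simpa [neg_sub] using this
  have hev1 : ∀ᶠ n in atTop, a n ≤ b n + 1 := by
    have := Metric.tendsto_nhds.mp h 1 one_pos
    filter_upwards [this] with n hn
    rw [Real.dist_eq, sub_zero] at hn
    have := (abs_lt.mp hn).2; linarith
  have hev2 : ∀ᶠ n in atTop, b n ≤ a n + 1 := by
    have := Metric.tendsto_nhds.mp h 1 one_pos
    filter_upwards [this] with n hn
    rw [Real.dist_eq, sub_zero] at hn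
    have := (abs_lt.mp hn).1; linarith
  by_cases hbdd : IsBoundedUnder (· ≤ ·) atTop b
  · have habdd : IsBoundedUnder (· ≤ ·) atTop a := by
      obtain ⟨M, hM⟩ := hbdd
      rw [Filter.eventually_map] at hM
      exact ⟨M + 1, Filter.eventually_map.mpr <| by
        filter_upwards [hM, hev1] with n h1 h2; linarith⟩
    exact le_antisymm (aux_limsup_le ha hb h hbdd) (aux_limsup_le hb ha h' habdd)
  · have habdd : ¬ IsBoundedUnder (· ≤ ·) atTop a := by
      intro ⟨M, hM⟩
      rw [Filter.eventually_map] at hM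
      exact hbdd ⟨M + 1, Filter.eventually_map.mpr <| by
        filter_upwards [hM, hev2] with n h1 h2; linarith⟩
    rw [Filter.limsup_eq, Filter.limsup_eq]
    have e1 : {x : ℝ | ∀ᶠ n in atTop, a n ≤ x} = ∅ := by
      ext x; simp only [Set.mem_setOf_eq, Set.mem_empty_iff_false, iff_false]
      exact fun hx => habdd ⟨x, hx⟩
    have e2 : {x : ℝ | ∀ᶠ n in atTop, b n ≤ x} = ∅ := by
      ext x; simp only [Set.mem_setOf_eq, Set.mem_empty_iff_false, iff_false]
      exact fun hx => hbdd ⟨x, hx⟩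
    rw [e1, e2]

private lemma aux_inner_sup {ι : Type*} (S : Set ι) (H : ι → ℝ) (u : ι) :
    (⨆ _ : u ∈ S, H u) = if u ∈ S then H u else 0 := by
  classical
  by_cases hu : u ∈ S
  · rw [if_pos hu, ciSup_pos hu]
  · rw [if_neg hu]
    haveI : IsEmpty (u ∈ S) := ⟨hu⟩
    exact Real.iSup_of_isEmpty _

private lemma aux_biSup_nonneg {ι : Type*} (S : Set ι) (H : ι → ℝ)
    (h0 : ∀ u ∈ S, 0 ≤ H u) : 0 ≤ ⨆ u ∈ S, H u := by
  refine Real.iSup_nonneg fun u => ?_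
  rw [aux_inner_sup]
  split_ifs with hu
  · exact h0 u hu
  · exact le_refl 0

private lemma aux_biSup_bdd {ι : Type*} (S : Set ι) (H : ι → ℝ) {M : ℝ}
    (hM : ∀ u ∈ S, H u ≤ M) :
    BddAbove (Set.range fun u => ⨆ _ : u ∈ S, H u) := by
  refine ⟨max M 0, ?_⟩
  rintro x ⟨u, rfl⟩
  show (⨆ _ : u ∈ S, H u) ≤ max M 0
  rw [aux_inner_sup]
  split_ifs with hu
  · exact le_max_of_le_left (hM u hu)
  · exact le_max_right _ _

private lemma aux_le_biSup {ι : Type*} (S : Set ι) (H : ι → ℝ) {M : ℝ}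
    (hM : ∀ u ∈ S, H u ≤ M) {u : ι} (hu : u ∈ S) : H u ≤ ⨆ u ∈ S, H u := by
  have := le_ciSup (aux_biSup_bdd S H hM) u
  rwa [ciSup_pos hu] at this

private lemma aux_biSup_le {ι : Type*} (S : Set ι) (H : ι → ℝ) {x : ℝ}
    (hx : 0 ≤ x) (h : ∀ u ∈ S, H u ≤ x) : (⨆ u ∈ S, H u) ≤ x := by
  refine Real.iSup_le (fun u => ?_) hx
  rw [aux_inner_sup]
  split_ifs with hu
  · exact h u hu
  · exact hx

private lemma aux_abs_biSup_sub {ι : Type*} (S : Set ι) (F G : ι → ℝ) {M E : ℝ}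
    (hE : 0 ≤ E)
    (hF0 : ∀ u ∈ S, 0 ≤ F u) (hG0 : ∀ u ∈ S, 0 ≤ G u)
    (hFM : ∀ u ∈ S, F u ≤ M)
    (hFG : ∀ u ∈ S, |F u - G u| ≤ E) :
    |(⨆ u ∈ S, F u) - ⨆ u ∈ S, G u| ≤ E := by
  have hGM : ∀ u ∈ S, G u ≤ M + E := fun u hu => by
    have := (abs_le.mp (hFG u hu)).1
    have := hFM u hu
    linarith
  have hFs : 0 ≤ ⨆ u ∈ S, F u := aux_biSup_nonneg S F hF0
  have hGs : 0 ≤ ⨆ u ∈ S, G u := aux_biSup_nonneg S G hG0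
  rw [abs_sub_le_iff]
  constructor
  · have : (⨆ u ∈ S, F u) ≤ (⨆ u ∈ S, G u) + E := by
      refine aux_biSup_le S F (by linarith) fun u hu => ?_
      have h1 : F u ≤ G u + E := by have := (abs_le.mp (hFG u hu)).2; linarith
      exact h1.trans (add_le_add_left (aux_le_biSup S G hGM hu) E)
    linarith
  · have : (⨆ u ∈ S, G u) ≤ (⨆ u ∈ S, F u) + E := by
      refine aux_biSup_le S G (by linarith) fun u hu => ?_
      have h1 : G u ≤ F u + E := by have := (abs_le.mp (hFG u hu)).1; linarith
      exact h1.trans (add_le_add_left (aux_le_biSup S F hFM hu) E)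
    linarith

private lemma aux_empCt_mem {d : ℕ} (U : Fin d → ℕ → ℝ) (n : ℕ) (u : Fin d → ℝ) :
    0 ≤ empCt U n u ∧ empCt U n u ≤ 1 := by
  unfold empCt
  constructor
  · apply div_nonneg _ (Nat.cast_nonneg n)
    apply Finset.sum_nonneg
    intro i _
    apply Finset.prod_nonneg
    intro j _
    split_ifs <;> norm_num
  · rcases Nat.eq_zero_or_pos n with h | h
    · subst h; simp
    · rw [div_le_one (by exact_mod_cast h)]
      calc (∑ i ∈ Finset.range n, ∏ j, if U j i ≤ u j then (1:ℝ) else 0)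
          ≤ ∑ _i ∈ Finset.range n, (1:ℝ) := by
            apply Finset.sum_le_sum
            intro i _
            apply Finset.prod_le_one
            · intro j _; split_ifs <;> norm_num
            · intro j _; split_ifs <;> norm_num
        _ = n := by simp

private lemma aux_empCop_mem {d : ℕ} (U : Fin d → ℕ → ℝ) (n : ℕ) (u : Fin d → ℝ) :
    0 ≤ empCop U n u ∧ empCop U n u ≤ 1 := by
  unfold empCop
  exact aux_empCt_mem U n _

/-- **Transfer of the LIL through the strong approximation.**  On the probability
space of the strong approximation theorem, almost surely,
`limsup_n (n/(2 log log n))^{1/2} sup_u |C_n(u) − C(u)|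
  = limsup_n sup_u |K*_C(u,n)| / (2 n log log n)^{1/2}`. -/
theorem lil_transfer
    {d : ℕ} (hd : 0 < d) {Ω : Type*} [MeasurableSpace Ω]
    (P : Measure Ω) [IsProbabilityMeasure P]
    (X : ℕ → Ω → Fin d → ℝ) (hX : IsIIDSeq P X)
    (μ : Measure (Fin d → ℝ)) (hμ : Measure.map (X 0) P = μ)
    (hmarg : ∀ j, Continuous (margF μ j))
    (Cp : Fin d → (Fin d → ℝ) → ℝ)
    (hsmooth : SecondOrderSmooth d (copulaOf μ))
    (hCp : IsPartialDerivs d (copulaOf μ) Cp)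
    (K : (Fin d → ℝ) → ℝ → Ω → ℝ) (hK : IsKieferCopula P (copulaOf μ) K)
    (hSA : ∀ᵐ ω ∂P, ∃ c > (0:ℝ), ∀ᶠ n : ℕ in atTop, ∀ u ∈ unitCube d,
      |Real.sqrt n *
          (Real.sqrt n * (empCop (unifOf μ X ω) n u - copulaOf μ u)) -
        copulaGaussian Cp K u n ω| ≤
        c * (n : ℝ) ^ ((1:ℝ)/2 - 1/(4*(d:ℝ))) * Real.log n ^ ((3:ℝ)/2)) :
    ∀ᵐ ω ∂P,
      Filter.limsup (fun n : ℕ =>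
          Real.sqrt ((n : ℝ) / (2 * Real.log (Real.log n))) *
            ⨆ u ∈ unitCube d, |empCop (unifOf μ X ω) n u - copulaOf μ u|)
        Filter.atTop
      = Filter.limsup (fun n : ℕ =>
          (⨆ u ∈ unitCube d, |copulaGaussian Cp K u n ω|) /
            Real.sqrt (2 * (n : ℝ) * Real.log (Real.log n)))
        Filter.atTop := by
  haveI : IsProbabilityMeasure μ := by
    rw [← hμ]; exact Measure.isProbabilityMeasure_map (hX.1 0).aemeasurable
  have hCf0 : ∀ u : Fin d → ℝ, 0 ≤ copulaOf μ u := fun u => ENNReal.toReal_nonneg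
  have hCf1 : ∀ u : Fin d → ℝ, copulaOf μ u ≤ 1 := fun u => by
    simpa [copulaOf, distF] using ENNReal.toReal_mono ENNReal.one_ne_top (prob_le_one (μ := μ))
  have hdR : (0:ℝ) < (d:ℝ) := by exact_mod_cast hd
  have hγ : (0:ℝ) < 1/(4*(d:ℝ)) := by
    apply div_pos one_pos; linarith
  have hL1ev : ∀ᶠ n : ℕ in atTop, 1 ≤ Real.log (Real.log (n:ℝ)) := by
    have : Tendsto (fun n : ℕ => Real.log (Real.log (n:ℝ))) atTop atTop :=
      (Real.tendsto_log_atTop.comp Real.tendsto_log_atTop).comp tendsto_natCast_atTop_atTop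
    exact this.eventually_ge_atTop 1
  filter_upwards [hSA] with ω hω
  obtain ⟨c, hc, hev⟩ := hω
  -- the vanishing bound
  have hg : Tendsto (fun n : ℕ =>
      c * (Real.log (n:ℝ) ^ ((3:ℝ)/2) / (n:ℝ) ^ ((1:ℝ)/(4*(d:ℝ))))) atTop (nhds 0) := by
    have hLO := isLittleO_log_rpow_rpow_atTop (s := 1/(4*(d:ℝ))) ((3:ℝ)/2) hγ
    have h0 : Tendsto (fun x : ℝ => Real.log x ^ ((3:ℝ)/2) / x ^ ((1:ℝ)/(4*(d:ℝ))))
        atTop (nhds 0) := hLO.tendsto_div_nhds_zero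
    have h1 := (h0.comp (tendsto_natCast_atTop_atTop (R := ℝ))).const_mul c
    simpa using h1
  apply aux_limsup_eq
  · intro n
    exact mul_nonneg (Real.sqrt_nonneg _)
      (aux_biSup_nonneg _ _ fun u _ => abs_nonneg _)
  · intro n
    exact div_nonneg (aux_biSup_nonneg _ _ fun u _ => abs_nonneg _) (Real.sqrt_nonneg _)
  · apply squeeze_zero_norm' _ hg
    filter_upwards [hev, eventually_ge_atTop 1, hL1ev] with n herr hn1 hL
    simp only [Real.norm_eq_abs]
    have hn1' : (1:ℝ) ≤ (n:ℝ) := by exact_mod_cast hn1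
    have npos : (0:ℝ) < (n:ℝ) := by linarith
    set L := Real.log (Real.log (n:ℝ)) with hLdef
    have Lpos : (0:ℝ) < L := by linarith
    set s := Real.sqrt (2 * (n:ℝ) * L) with hsdef
    have spos : 0 < s := Real.sqrt_pos.mpr (by positivity)
    have hlogn : (0:ℝ) ≤ Real.log (n:ℝ) := Real.log_nonneg hn1'
    set T := Real.log (n:ℝ) ^ ((3:ℝ)/2) with hTdef
    have hT0 : 0 ≤ T := Real.rpow_nonneg hlogn _
    set E := c * (n:ℝ) ^ ((1:ℝ)/2 - 1/(4*(d:ℝ))) * T with hEdef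
    have hE0 : 0 ≤ E := by
      apply mul_nonneg (mul_nonneg hc.le (Real.rpow_nonneg npos.le _)) hT0
    have hnn : Real.sqrt (n:ℝ) * Real.sqrt (n:ℝ) = (n:ℝ) := Real.mul_self_sqrt npos.le
    have key1 : Real.sqrt ((n:ℝ) / (2*L)) = (n:ℝ) / s := by
      rw [eq_div_iff spos.ne', hsdef, ← Real.sqrt_mul (by positivity)]
      rw [show (n:ℝ)/(2*L) * (2*(n:ℝ)*L) = (n:ℝ)^2 by field_simp]
      exact Real.sqrt_sq npos.le
    have key2 : (n:ℝ) * (⨆ u ∈ unitCube d, |empCop (unifOf μ X ω) n u - copulaOf μ u|)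
        = ⨆ u ∈ unitCube d,
            |Real.sqrt n * (Real.sqrt n * (empCop (unifOf μ X ω) n u - copulaOf μ u))| := by
      rw [Real.mul_iSup_of_nonneg npos.le]
      refine iSup_congr fun u => ?_
      rw [Real.mul_iSup_of_nonneg npos.le]
      refine iSup_congr fun _ => ?_
      rw [← mul_assoc, hnn, abs_mul, abs_of_nonneg npos.le]
    rw [key1, div_mul_eq_mul_div, key2, div_sub_div_same, abs_div, abs_of_nonneg spos.le]
    have step1 : abs ((⨆ u ∈ unitCube d,
          |Real.sqrt n * (Real.sqrt n * (empCop (unifOf μ X ω) n u - copulaOf μ u))|) -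
        ⨆ u ∈ unitCube d, |copulaGaussian Cp K u (↑n) ω|) ≤ E := by
      refine aux_abs_biSup_sub (M := 2*(n:ℝ)) _ _ _ hE0
        (fun u _ => abs_nonneg _) (fun u _ => abs_nonneg _) ?_ ?_
      · intro u hu
        have h1 : |empCop (unifOf μ X ω) n u - copulaOf μ u| ≤ 2 := by
          obtain ⟨he0, he1⟩ := aux_empCop_mem (unifOf μ X ω) n u
          have := hCf0 u; have := hCf1 u
          rw [abs_le]; constructor <;> linarith
        calc |Real.sqrt n * (Real.sqrt n * (empCop (unifOf μ X ω) n u - copulaOf μ u))|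
            = (n:ℝ) * |empCop (unifOf μ X ω) n u - copulaOf μ u| := by
              rw [← mul_assoc, hnn, abs_mul, abs_of_nonneg npos.le]
          _ ≤ (n:ℝ) * 2 := mul_le_mul_of_nonneg_left h1 npos.le
          _ = 2 * (n:ℝ) := by ring
      · intro u hu
        exact (abs_abs_sub_abs_le_abs_sub _ _).trans (herr u hu)
    calc abs ((⨆ u ∈ unitCube d,
            |Real.sqrt n * (Real.sqrt n * (empCop (unifOf μ X ω) n u - copulaOf μ u))|) -
          ⨆ u ∈ unitCube d, |copulaGaussian Cp K u (↑n) ω|) / s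
        ≤ E / s := by gcongr
      _ ≤ E / Real.sqrt (n:ℝ) := by
          apply div_le_div_of_nonneg_left hE0 (Real.sqrt_pos.mpr npos)
          rw [hsdef]
          apply Real.sqrt_le_sqrt
          nlinarith
      _ = c * (T / (n:ℝ) ^ ((1:ℝ)/(4*(d:ℝ)))) := by
          rw [hEdef, Real.sqrt_eq_rpow, Real.rpow_sub npos]
          have h2 : ((n:ℝ) ^ ((1:ℝ)/2)) ≠ 0 := (Real.rpow_pos_of_pos npos _).ne'
          have h3 : ((n:ℝ) ^ ((1:ℝ)/(4*(d:ℝ)))) ≠ 0 := (Real.rpow_pos_of_pos npos _).ne'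
          field_simp
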